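/- There exists a family τ = (τ_p)_p with each τ_p ∈ ℤ (viewed in ℤ_p) such that in the ring R_τ = {f ∈ ℚ[x] : ∀ p, f(τ_p) ∈ ℤ_p}, every element of R_τ \ ℤ is divisible by infinitely many prime numbers; in particular, the prime elements of R_τ are exactly (up to sign) the prime numbers. -/

import Mathlib

open Polynomial


lemma int_of_padicNorm_le_one {r : ℚ} (h : ∀ p : ℕ, p.Prime → padicNorm p r ≤ 1) :
    ∃ m : ℤ, r = m := by
  rcases eq_or_ne r 0 with rfl | hr
  · exact ⟨0, by norm_num⟩
  by_cases hd : r.den = 1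
  · exact ⟨r.num, by rw [← Rat.num_div_den r, hd]; simp⟩
  exfalso
  obtain ⟨p, hp, hpd⟩ := Nat.exists_prime_and_dvd hd
  haveI : Fact p.Prime := ⟨hp⟩
  have hnum : ¬ (p : ℤ) ∣ r.num := by
    intro hc
    have h1 : p ∣ r.num.natAbs := Int.natCast_dvd_natCast.mp (by
      simpa [Int.dvd_natAbs] using hc)
    have h2 := Nat.dvd_gcd h1 hpd
    rw [Nat.Coprime.gcd_eq_one r.reduced] at h2
    exact hp.one_lt.ne' (Nat.dvd_one.mp h2)
  have hvnum : padicValInt p r.num = 0 := padicValInt.eq_zero_of_not_dvd hnum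
  have hvden : 1 ≤ padicValNat p r.den :=
    one_le_padicValNat_of_dvd r.pos.ne' hpd
  have hval : padicValRat p r ≤ -1 := by
    unfold padicValRat
    rw [hvnum]
    omega
  have hnorm : padicNorm p r = (p : ℚ) ^ (-padicValRat p r) :=
    padicNorm.eq_zpow_of_nonzero hr
  have hlt : (1 : ℚ) < (p : ℚ) ^ (-padicValRat p r) := by
    have hp1 : (1:ℚ) < (p:ℚ) := by exact_mod_cast hp.one_lt
    exact one_lt_zpow₀ hp1 (by omega)
  have := h p hp
  rw [hnorm] at this
  linarith

lemma infinite_primes_dvd_eval (g : Polynomial ℤ) (hg : 0 < g.natDegree) :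
    {p : ℕ | p.Prime ∧ ∃ z : ℤ, (p : ℤ) ∣ g.eval z}.Infinite := by
  set c : ℤ := g.eval 0 with hc
  rcases eq_or_ne c 0 with hc0 | hc0
  · refine Nat.infinite_setOf_prime.mono ?_
    intro p hp
    exact ⟨hp, 0, by rw [← hc, hc0]; exact dvd_zero _⟩
  by_contra hfin
  rw [Set.not_infinite] at hfin
  set t : Finset ℕ := hfin.toFinset with ht
  set D : ℤ := (2 * ∏ p ∈ t, (p : ℤ)) ^ 2 with hD
  set K : ℤ := c ^ 2 * D with hK
  have hprod0 : (∏ p ∈ t, (p : ℤ)) ≠ 0 := by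
    apply Finset.prod_ne_zero_iff.mpr
    intro p hp
    have : p.Prime := (hfin.mem_toFinset.mp hp).1
    exact_mod_cast this.ne_zero
  have hK0 : K ≠ 0 := by positivity
  have hcomp : (g.comp (C K * X)).natDegree = g.natDegree := by
    rw [natDegree_comp, natDegree_C_mul hK0, natDegree_X, mul_one]
  have hBfin : {x : ℤ | |g.eval (K * x)| ≤ |c|}.Finite := by
    apply Set.Finite.subset (Set.Finite.biUnion (Set.finite_Icc (-|c|) |c|)
      (fun v _ => finite_setOf_isRoot (p := g.comp (C K * X) - C v) ?_))
    · intro x hx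
      simp only [Set.mem_setOf_eq] at hx
      simp only [Set.mem_iUnion, Set.mem_setOf_eq]
      exact ⟨g.eval (K * x), abs_le.mp hx, by simp [IsRoot, eval_comp]⟩
    · intro h0
      have : (g.comp (C K * X) - C v).natDegree = g.natDegree := by
        rw [natDegree_sub_C, hcomp]
      rw [h0] at this
      simp at this
      omega
  obtain ⟨x₀, hx₀⟩ := (Set.Finite.infinite_compl hBfin).nonempty
  simp only [Set.mem_compl_iff, Set.mem_setOf_eq, not_le] at hx₀
  -- g.eval (K * x₀) = c * u with u = 1 + c * D * x₀ * w
  obtain ⟨w, hw⟩ : K * x₀ ∣ g.eval (K * x₀) - c := by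
    simpa using sub_dvd_eval_sub (K * x₀) 0 g
  set u : ℤ := 1 + c * D * x₀ * w with hu
  have heval : g.eval (K * x₀) = c * u := by
    have : g.eval (K * x₀) = c + K * x₀ * w := by linarith [hw]
    rw [this, hu, hK]; ring
  have huabs : 1 < |u| := by
    have : |c| * 1 < |c| * |u| := by
      rw [← abs_mul, ← heval]; simpa using hx₀
    have hcpos : 0 < |c| := abs_pos.mpr hc0
    exact lt_of_mul_lt_mul_left this (le_of_lt hcpos)
  obtain ⟨P, hP, hPu⟩ := Int.exists_prime_and_dvd (n := u) (by
    intro h1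
    rw [Int.abs_eq_natAbs, h1] at huabs
    norm_num at huabs)
  set q : ℕ := P.natAbs with hq
  have hqprime : q.Prime := Int.prime_iff_natAbs_prime.mp hP
  have hqu : (q : ℤ) ∣ u := (Int.natAbs_dvd).mpr hPu
  have hqS : q ∈ {p : ℕ | p.Prime ∧ ∃ z : ℤ, (p : ℤ) ∣ g.eval z} :=
    ⟨hqprime, K * x₀, heval ▸ Dvd.dvd.mul_left hqu c⟩
  have hqt : q ∈ t := hfin.mem_toFinset.mpr hqS
  have hqD : (q : ℤ) ∣ D := by
    have h1 : (q : ℤ) ∣ ∏ p ∈ t, (p : ℤ) := Finset.dvd_prod_of_mem _ hqt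
    exact Dvd.dvd.mul_left h1 2 |>.trans (dvd_pow_self _ two_ne_zero)
  have : (q : ℤ) ∣ 1 := by
    have h2 : (q : ℤ) ∣ c * D * x₀ * w := by
      exact Dvd.dvd.mul_right (Dvd.dvd.mul_right (Dvd.dvd.mul_left hqD c) x₀) w
    simpa [hu] using dvd_sub hqu h2
  have h3 := Int.le_of_dvd one_pos this
  have := hqprime.one_lt
  omega

noncomputable def polyEnum : ℕ ≃ Polynomial ℤ × ℕ :=
  letI : Infinite (Polynomial ℤ) := Infinite.of_injective _ (C_injective (R := ℤ))
  letI : Countable (AddMonoidAlgebra ℤ ℕ) := Function.Injective.countable (f := AddMonoidAlgebra.coeff) fun a b h => by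
      cases a; cases b; simpa using h
  letI : Countable (Polynomial ℤ) :=
    Function.Injective.countable (f := Polynomial.toFinsupp) fun a b h => by
      cases a; cases b; simpa using h
  letI := (nonempty_denumerable (Polynomial ℤ × ℕ)).some
  (Denumerable.eqv (Polynomial ℤ × ℕ)).symm

def Sfull (g : Polynomial ℤ) : Set ℕ :=
  if 0 < g.natDegree then {p : ℕ | p.Prime ∧ ∃ z : ℤ, (p : ℤ) ∣ g.eval z}
  else {p : ℕ | p.Prime}


lemma Sfull_infinite (g : Polynomial ℤ) : (Sfull g).Infinite := by
  unfold Sfull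
  split
  · exact infinite_primes_dvd_eval g ‹_›
  · exact Nat.infinite_setOf_prime

lemma Sfull_prime {g : Polynomial ℤ} {p : ℕ} (h : p ∈ Sfull g) : p.Prime := by
  unfold Sfull at h
  split at h
  · exact h.1
  · exact h

noncomputable def Fseq : ℕ → ℕ
  | 0 => ((Sfull_infinite (polyEnum 0).1).exists_gt 0).choose
  | k + 1 => ((Sfull_infinite (polyEnum (k + 1)).1).exists_gt (Fseq k)).choose

lemma Fseq_mem (k : ℕ) : Fseq k ∈ Sfull (polyEnum k).1 := by
  cases k with
  | zero => exact ((Sfull_infinite (polyEnum 0).1).exists_gt 0).choose_spec.1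
  | succ k => exact ((Sfull_infinite (polyEnum (k + 1)).1).exists_gt (Fseq k)).choose_spec.1

lemma Fseq_strictMono : StrictMono Fseq :=
  strictMono_nat_of_lt_succ fun k =>
    ((Sfull_infinite (polyEnum (k + 1)).1).exists_gt (Fseq k)).choose_spec.2

open scoped Classical in
noncomputable def zsel (p : ℕ) : ℤ :=
  if h : ∃ kz : ℕ × ℤ, Fseq kz.1 = p ∧ (p : ℤ) ∣ ((polyEnum kz.1).1).eval kz.2
  then h.choose.2 else 0

lemma zsel_spec (g : Polynomial ℤ) (hg : 0 < g.natDegree) :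
    {p : ℕ | p.Prime ∧ (p : ℤ) ∣ g.eval (zsel p)}.Infinite := by
  apply Set.infinite_of_injective_forall_mem
    (f := fun n : ℕ => Fseq (polyEnum.symm (g, n)))
  case hi =>
    intro n m h
    have h1 := Fseq_strictMono.injective h
    have h2 := polyEnum.symm.injective h1
    exact (Prod.mk.injEq _ _ _ _).mp h2 |>.2
  case hf =>
    intro n
    set k : ℕ := polyEnum.symm (g, n) with hk
    have hek : (polyEnum k).1 = g := by rw [hk, Equiv.apply_symm_apply]
    have hmem : Fseq k ∈ Sfull g := hek ▸ Fseq_mem k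
    rw [Sfull, if_pos hg] at hmem
    obtain ⟨hp, z, hz⟩ := hmem
    set p : ℕ := Fseq k with hpk
    have hcond : ∃ kz : ℕ × ℤ, Fseq kz.1 = p ∧ (p : ℤ) ∣ ((polyEnum kz.1).1).eval kz.2 :=
      ⟨(k, z), rfl, by rw [hek]; exact hz⟩
    refine ⟨hp, ?_⟩
    rw [zsel]
    rw [dif_pos hcond]
    obtain ⟨h1, h2⟩ := hcond.choose_spec
    have : hcond.choose.1 = k := Fseq_strictMono.injective h1
    rw [this, hek] at h2
    exact h2

noncomputable def Rtau (τ : (p : ℕ) → [Fact p.Prime] → ℤ_[p]) : Subring (Polynomial ℚ) :=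
  ⨅ (p : ℕ) (hp : Fact p.Prime),
    Subring.comap (Polynomial.aeval ((τ p : ℤ_[p]) : ℚ_[p]) : Polynomial ℚ →ₐ[ℚ] ℚ_[p]).toRingHom
      (PadicInt.Coe.ringHom (p := p)).range

variable {τ : (p : ℕ) → [Fact p.Prime] → ℤ_[p]}

lemma mem_Rtau_iff {f : Polynomial ℚ} :
    f ∈ Rtau τ ↔ ∀ (p : ℕ) (hp : Fact p.Prime), ‖(aeval ((@τ p hp : ℚ_[p])) f)‖ ≤ 1 := by
  rw [Rtau]
  simp only [Subring.mem_iInf, Subring.mem_comap, RingHom.mem_range, AlgHom.toRingHom_eq_coe,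
    RingHom.coe_coe]
  constructor
  · intro h p hp
    obtain ⟨y, hy⟩ := h p hp
    rw [← hy]
    exact y.2
  · intro h p hp
    exact ⟨⟨_, h p hp⟩, rfl⟩

lemma aeval_C' (p : ℕ) [Fact p.Prime] (x : ℚ_[p]) (r : ℚ) :
    aeval x (C r) = (r : ℚ_[p]) := by
  rw [aeval_C]
  exact eq_ratCast (algebraMap ℚ ℚ_[p]) r

lemma norm_ratCast (p : ℕ) [Fact p.Prime] (r : ℚ) :
    ‖(r : ℚ_[p])‖ = padicNorm p r := Padic.eq_padicNorm r

lemma C_mem_Rtau_iff {r : ℚ} : C r ∈ Rtau τ ↔ ∃ m : ℤ, r = m := by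
  constructor
  · intro h
    apply int_of_padicNorm_le_one
    intro p hp
    haveI : Fact p.Prime := ⟨hp⟩
    have := mem_Rtau_iff.mp h p ‹_›
    rw [aeval_C', norm_ratCast] at this
    exact_mod_cast this
  · rintro ⟨m, rfl⟩
    rw [mem_Rtau_iff]
    intro p hp
    rw [aeval_C']
    push_cast
    exact Padic.norm_int_le_one m

lemma coe_natCast_Rtau (q : ℕ) : ((q : Rtau τ) : Polynomial ℚ) = C (q : ℚ) := by
  push_cast
  simp

lemma isUnit_Rtau_iff (u : Rtau τ) : IsUnit u ↔ ((u : Polynomial ℚ) = 1 ∨ (u : Polynomial ℚ) = -1) := by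
  constructor
  · intro hu
    obtain ⟨v, hv⟩ := hu.exists_right_inv
    have h1 : (u : Polynomial ℚ) * (v : Polynomial ℚ) = 1 := by
      exact_mod_cast congrArg (fun x : Rtau τ => (x : Polynomial ℚ)) hv
    obtain ⟨r, hr, hCr⟩ := Polynomial.isUnit_iff.mp (IsUnit.of_mul_eq_one _ h1)
    have hr0 : r ≠ 0 := hr.ne_zero
    have hv' : (v : Polynomial ℚ) = C r⁻¹ := by
      have hC0 : (C r : Polynomial ℚ) ≠ 0 := by simpa using hr0
      apply mul_left_cancel₀ hC0
      rw [← C_mul, mul_inv_cancel₀ hr0, C_1, hCr, h1]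
    have hu_mem : C r ∈ Rtau τ := by rw [hCr]; exact u.2
    have hv_mem : C r⁻¹ ∈ Rtau τ := by rw [← hv']; exact v.2
    obtain ⟨m, hm⟩ := C_mem_Rtau_iff.mp hu_mem
    obtain ⟨m', hm'⟩ := C_mem_Rtau_iff.mp hv_mem
    have hmm' : (m : ℚ) * (m' : ℚ) = 1 := by
      rw [← hm, ← hm', mul_inv_cancel₀ hr0]
    have : m * m' = 1 := by exact_mod_cast hmm'
    rcases Int.isUnit_iff.mp (IsUnit.of_mul_eq_one _ this) with h | h
    · left; rw [← hCr, hm, h]; simp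
    · right; rw [← hCr, hm, h]; simp
  · intro h
    rcases h with h | h
    · have : u = 1 := Subtype.ext (by rw [h]; rfl)
      rw [this]; exact isUnit_one
    · have : u = -1 := Subtype.ext (by rw [h]; push_cast; ring)
      rw [this]; simpa using (isUnit_one (M := Rtau τ)).neg

lemma norm_natCast_eq_one_of_ne {p q : ℕ} [Fact p.Prime] (hq : q.Prime) (hne : p ≠ q) :
    ‖((q : ℕ) : ℚ_[p])‖ = 1 := by
  have hle : ‖((q : ℕ) : ℚ_[p])‖ ≤ 1 := by
    have := Padic.norm_int_le_one (p := p) (q : ℤ)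
    push_cast at this ⊢
    exact this
  have hnlt : ¬ ‖((q : ℕ) : ℚ_[p])‖ < 1 := by
    intro hlt
    have : ((p : ℤ)) ∣ (q : ℤ) := by
      rw [← Padic.norm_intCast_lt_one_iff]
      push_cast
      exact hlt
    have hdvd : p ∣ q := Int.natCast_dvd_natCast.mp this
    exact hne ((Nat.prime_dvd_prime_iff_eq (Fact.out) hq).mp hdvd)
  linarith [lt_or_eq_of_le hle]

lemma natCast_dvd_iff_Rtau {q : ℕ} [hq : Fact q.Prime] {f : Rtau τ} :
    (q : Rtau τ) ∣ f ↔ ‖aeval ((τ q : ℚ_[q])) (f : Polynomial ℚ)‖ < 1 := by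
  have hq1 : (1 : ℝ) < q := by exact_mod_cast hq.out.one_lt
  have hq0 : (0 : ℝ) < q := by linarith
  have hnormq : ‖((q : ℕ) : ℚ_[q])‖ = (q : ℝ)⁻¹ := Padic.norm_p
  constructor
  · rintro ⟨c, hc⟩
    have h1 : (f : Polynomial ℚ) = (q : Polynomial ℚ) * (c : Polynomial ℚ) := by
      exact_mod_cast congrArg (fun x : Rtau τ => (x : Polynomial ℚ)) hc
    rw [h1, map_mul, map_natCast, norm_mul, hnormq]
    have hcle : ‖aeval ((τ q : ℚ_[q])) (c : Polynomial ℚ)‖ ≤ 1 := mem_Rtau_iff.mp c.2 q hq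
    calc (q:ℝ)⁻¹ * ‖aeval ((τ q : ℚ_[q])) (c : Polynomial ℚ)‖ ≤ (q:ℝ)⁻¹ * 1 := by
          apply mul_le_mul_of_nonneg_left hcle (by positivity)
      _ < 1 := by rw [mul_one]; exact inv_lt_one_of_one_lt₀ hq1
  · intro h
    have hle : ‖aeval ((τ q : ℚ_[q])) (f : Polynomial ℚ)‖ ≤ (q : ℝ)⁻¹ := by
      have := (Padic.norm_le_pow_iff_norm_lt_pow_add_one
        (aeval ((τ q : ℚ_[q])) (f : Polynomial ℚ)) (-1)).mpr (by simpa using h)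
      simpa [zpow_neg_one] using this
    set c : Polynomial ℚ := C ((q : ℚ))⁻¹ * (f : Polynomial ℚ) with hcdef
    have hcmem : c ∈ Rtau τ := by
      rw [mem_Rtau_iff]
      intro p hp
      rw [hcdef, map_mul, aeval_C', norm_mul]
      have : ((((q : ℚ))⁻¹ : ℚ) : ℚ_[p]) = (((q : ℕ) : ℚ_[p]))⁻¹ := by rw [Rat.cast_inv, Rat.cast_natCast]
      rw [this, norm_inv]
      by_cases hpq : p = q
      · subst hpq
        rw [hnormq, inv_inv]
        calc (p:ℝ) * ‖aeval ((τ p : ℚ_[p])) (f : Polynomial ℚ)‖ ≤ (p:ℝ) * (p:ℝ)⁻¹ := by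
              apply mul_le_mul_of_nonneg_left _ (le_of_lt hq0)
              exact hle
          _ = 1 := mul_inv_cancel₀ (ne_of_gt hq0)
      · rw [norm_natCast_eq_one_of_ne hq.out hpq, inv_one, one_mul]
        exact mem_Rtau_iff.mp f.2 p hp
    refine ⟨⟨c, hcmem⟩, ?_⟩
    apply Subtype.ext
    show (f : Polynomial ℚ) = ((q : Rtau τ) : Polynomial ℚ) * c
    rw [coe_natCast_Rtau, hcdef, ← mul_assoc, ← C_mul,
      mul_inv_cancel₀ (by exact_mod_cast hq.out.ne_zero : (q:ℚ) ≠ 0), C_1, one_mul]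

lemma coe_intCast_Rtau (m : ℤ) : ((m : Rtau τ) : Polynomial ℚ) = C (m : ℚ) := by
  push_cast
  simp

lemma intCast_dvd_intCast_Rtau {m a : ℤ} (hm : m ≠ 0) :
    (m : Rtau τ) ∣ (a : Rtau τ) ↔ m ∣ a := by
  constructor
  · rintro ⟨c, hc⟩
    have h1 : (C (a : ℚ) : Polynomial ℚ) = C (m : ℚ) * (c : Polynomial ℚ) := by
      have := congrArg (fun x : Rtau τ => (x : Polynomial ℚ)) hc
      simpa [coe_intCast_Rtau] using this
    have hm0 : ((m : ℚ)) ≠ 0 := by exact_mod_cast hm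
    have hc' : (c : Polynomial ℚ) = C ((a : ℚ) / (m : ℚ)) := by
      apply mul_left_cancel₀ (show (C (m:ℚ) : Polynomial ℚ) ≠ 0 by simpa using hm0)
      rw [← h1, ← C_mul, mul_div_cancel₀ _ hm0]
    have hmem : C ((a : ℚ) / (m : ℚ)) ∈ Rtau τ := hc' ▸ c.2
    obtain ⟨k, hk⟩ := C_mem_Rtau_iff.mp hmem
    refine ⟨k, ?_⟩
    have : (a : ℚ) = (m : ℚ) * (k : ℚ) := by
      field_simp at hk
      linarith [hk]
    exact_mod_cast this
  · intro h
    exact_mod_cast (Int.castRingHom (Rtau τ)).map_dvd h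

noncomputable def tauSel : (p : ℕ) → [Fact p.Prime] → ℤ_[p] := fun p _ => ((zsel p : ℤ) : ℤ_[p])

lemma infinite_prime_divisors (f : Rtau tauSel) (hf : 0 < (f : Polynomial ℚ).natDegree) :
    {q : ℕ | q.Prime ∧ (q : Rtau tauSel) ∣ f}.Infinite := by
  obtain ⟨b, hb⟩ := IsLocalization.integerNormalization_map_to_map
    (nonZeroDivisors ℤ) (f : Polynomial ℚ)
  set g : Polynomial ℤ := IsLocalization.integerNormalization (nonZeroDivisors ℤ)
    (f : Polynomial ℚ) with hg
  set N : ℤ := (b : ℤ) with hN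
  have hN0 : N ≠ 0 := nonZeroDivisors.ne_zero b.2
  have hNQ : ((N : ℚ)) ≠ 0 := by exact_mod_cast hN0
  have hmapeq : g.map (algebraMap ℤ ℚ) = C (N : ℚ) * (f : Polynomial ℚ) := by
    rw [hb, zsmul_eq_mul, C_eq_intCast]
  have hgdeg : 0 < g.natDegree := by
    have h1 : (g.map (algebraMap ℤ ℚ)).natDegree = g.natDegree :=
      natDegree_map_eq_of_injective (algebraMap ℤ ℚ).injective_int g
    have h2 : (C (N : ℚ) * (f : Polynomial ℚ)).natDegree = (f : Polynomial ℚ).natDegree := by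
      rw [natDegree_C_mul hNQ]
    rw [hmapeq, h2] at h1
    omega
  have hBfin : {p : ℕ | (p : ℤ) ∣ N}.Finite := by
    apply Set.Finite.subset (Set.finite_Iic N.natAbs)
    intro p hp
    simp only [Set.mem_setOf_eq] at hp
    have : p ∣ N.natAbs := Int.natCast_dvd_natCast.mp (by simpa [Int.dvd_natAbs] using hp)
    exact Nat.le_of_dvd (Int.natAbs_pos.mpr hN0) this
  refine ((zsel_spec g hgdeg).diff hBfin).mono ?_
  rintro q ⟨⟨hq, hdvd⟩, hqN⟩
  simp only [Set.mem_setOf_eq] at hqN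
  haveI : Fact q.Prime := ⟨hq⟩
  refine ⟨hq, ?_⟩
  rw [natCast_dvd_iff_Rtau]
  have hcoe : ((tauSel q : ℤ_[q]) : ℚ_[q]) = ((zsel q : ℤ) : ℚ_[q]) := by
    simp [tauSel]
  have hkey : ((N : ℤ) : ℚ_[q]) * aeval ((tauSel q : ℤ_[q]) : ℚ_[q]) (f : Polynomial ℚ)
      = ((g.eval (zsel q) : ℤ) : ℚ_[q]) := by
    rw [hcoe]
    have e1 : aeval ((zsel q : ℤ) : ℚ_[q]) (g.map (algebraMap ℤ ℚ))
        = aeval ((zsel q : ℤ) : ℚ_[q]) g := aeval_map_algebraMap _ _ _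
    have e2 : aeval ((zsel q : ℤ) : ℚ_[q]) g = ((g.eval (zsel q) : ℤ) : ℚ_[q]) := by
      have : ((zsel q : ℤ) : ℚ_[q]) = algebraMap ℤ ℚ_[q] (zsel q) := by
        rw [algebraMap_int_eq]; rfl
      rw [this, aeval_algebraMap_apply_eq_algebraMap_eval, algebraMap_int_eq]; rfl
    rw [← e2, ← e1, hmapeq, map_mul, aeval_C']
    push_cast
    ring
  have hnormN : ‖((N : ℤ) : ℚ_[q])‖ = 1 := by
    apply le_antisymm (Padic.norm_int_le_one N)
    by_contra hlt
    push_neg at hlt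
    exact hqN ((Padic.norm_intCast_lt_one_iff (k := N)).mp (lt_of_not_ge (by linarith)))
  have hnormg : ‖((g.eval (zsel q) : ℤ) : ℚ_[q])‖ < 1 :=
    Padic.norm_intCast_lt_one_iff.mpr hdvd
  calc ‖aeval ((tauSel q : ℤ_[q]) : ℚ_[q]) (f : Polynomial ℚ)‖
      = ‖((N : ℤ) : ℚ_[q])‖ * ‖aeval ((tauSel q : ℤ_[q]) : ℚ_[q]) (f : Polynomial ℚ)‖ := by
        rw [hnormN, one_mul]
    _ = ‖((g.eval (zsel q) : ℤ) : ℚ_[q])‖ := by rw [← norm_mul, hkey]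
    _ < 1 := hnormg

lemma prime_natCast_Rtau {q : ℕ} [hq : Fact q.Prime] : Prime ((q : ℕ) : Rtau τ) := by
  refine ⟨?_, ?_, ?_⟩
  · intro h0
    have := congrArg (fun x : Rtau τ => (x : Polynomial ℚ)) h0
    simp only [coe_natCast_Rtau] at this
    have : (q : ℚ) = 0 := by
      have h1 : C (q:ℚ) = C (0:ℚ) := by simpa using this
      exact C_injective h1
    exact hq.out.ne_zero (by exact_mod_cast this)
  · rw [isUnit_Rtau_iff, coe_natCast_Rtau]
    rintro (h | h)
    · have : (q : ℚ) = 1 := C_injective (by rw [h, ← C_1])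
      exact hq.out.one_lt.ne' (by exact_mod_cast this)
    · have : (q : ℚ) = -1 := C_injective (by rw [h, ← C_1, ← C_neg])
      have hq0 : (0:ℚ) ≤ q := by positivity
      rw [this] at hq0
      norm_num at hq0
  · intro a b hab
    rw [natCast_dvd_iff_Rtau] at hab ⊢
    rw [natCast_dvd_iff_Rtau (f := b)]
    have hcoe : ((a * b : Rtau τ) : Polynomial ℚ) = (a : Polynomial ℚ) * (b : Polynomial ℚ) := rfl
    rw [hcoe, map_mul, norm_mul] at hab
    by_contra hcon
    push_neg at hcon
    obtain ⟨h1, h2⟩ := hcon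
    have ha1 : ‖aeval ((τ q : ℚ_[q])) (a : Polynomial ℚ)‖ = 1 :=
      le_antisymm (mem_Rtau_iff.mp a.2 q hq) h1
    have hb1 : ‖aeval ((τ q : ℚ_[q])) (b : Polynomial ℚ)‖ = 1 :=
      le_antisymm (mem_Rtau_iff.mp b.2 q hq) h2
    rw [ha1, hb1] at hab
    norm_num at hab

lemma prime_Rtau_char (f : Rtau tauSel) (hp : Prime f) :
    ∃ q : ℕ, q.Prime ∧ ((f : Polynomial ℚ) = C (q : ℚ) ∨ (f : Polynomial ℚ) = -C (q : ℚ)) := by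
  have hdeg : (f : Polynomial ℚ).natDegree = 0 := by
    by_contra hd
    have hpos : 0 < (f : Polynomial ℚ).natDegree := Nat.pos_of_ne_zero hd
    obtain ⟨q, hq, hqf⟩ := (infinite_prime_divisors f hpos).nonempty
    haveI : Fact q.Prime := ⟨hq⟩
    obtain ⟨c, hc⟩ := hqf
    rcases hp.irreducible.isUnit_or_isUnit hc with hu | hu
    · exact (prime_natCast_Rtau (τ := tauSel) (q := q)).not_unit hu
    · rw [isUnit_Rtau_iff] at hu
      have hcoe : (f : Polynomial ℚ) = C (q : ℚ) * (c : Polynomial ℚ) := by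
        have := congrArg (fun x : Rtau tauSel => (x : Polynomial ℚ)) hc
        simpa [coe_natCast_Rtau] using this
      have hdeg0 : (f : Polynomial ℚ).natDegree = 0 := by
        rcases hu with hu | hu
        · rw [hcoe, hu, mul_one, natDegree_C]
        · rw [hcoe, hu, mul_neg, mul_one, natDegree_neg, natDegree_C]
      omega
  obtain ⟨r, hr⟩ := natDegree_eq_zero.mp hdeg
  have hrmem : C r ∈ Rtau tauSel := hr ▸ f.2
  obtain ⟨m, hm⟩ := C_mem_Rtau_iff.mp hrmem
  have hfm : f = (m : Rtau tauSel) :=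
    Subtype.ext (by rw [coe_intCast_Rtau, ← hr, hm])
  have hm0 : m ≠ 0 := by
    rintro rfl
    rw [hfm] at hp
    simp at hp
  have hmprime : Prime m := by
    refine ⟨hm0, ?_, ?_⟩
    · intro hmu
      rcases Int.isUnit_iff.mp hmu with h | h
      · apply hp.not_unit
        rw [hfm, h]
        simp
      · apply hp.not_unit
        rw [hfm, h]
        simpa using (isUnit_one (M := Rtau tauSel)).neg
    · intro a b hab
      have h1 : (m : Rtau tauSel) ∣ ((a : Rtau tauSel) * (b : Rtau tauSel)) := by
        have h2 := map_dvd (Int.castRingHom (Rtau tauSel)) hab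
        simp only [eq_intCast] at h2
        push_cast at h2
        exact h2
      rw [← hfm] at h1
      rcases hp.2.2 _ _ h1 with h | h
      · left
        rw [hfm] at h
        exact (intCast_dvd_intCast_Rtau hm0).mp h
      · right
        rw [hfm] at h
        exact (intCast_dvd_intCast_Rtau hm0).mp h
  refine ⟨m.natAbs, Int.prime_iff_natAbs_prime.mp hmprime, ?_⟩
  have hcast : ((m.natAbs : ℕ) : ℚ) = ((m.natAbs : ℤ) : ℚ) := by rw [Int.cast_natCast]
  rcases Int.natAbs_eq m with h | h
  · left
    rw [← hr, hm]
    congr 1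
    rw [hcast]
    exact congrArg (fun z : ℤ => (z : ℚ)) h
  · right
    rw [← hr, hm, ← C_neg]
    congr 1
    rw [hcast, ← Int.cast_neg]
    exact congrArg (fun z : ℤ => (z : ℚ)) h


theorem exists_tau_only_standard_primes :
    ∃ τ : (p : ℕ) → [Fact p.Prime] → ℤ_[p],
      (∀ (p : ℕ) [Fact p.Prime], ∃ z : ℤ, τ p = (z : ℤ_[p])) ∧
      (∀ f : Rtau τ, 0 < (f : Polynomial ℚ).natDegree →
        {q : ℕ | q.Prime ∧ (q : Rtau τ) ∣ f}.Infinite) ∧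
      (∀ f : Rtau τ, Prime f ↔ ∃ q : ℕ, q.Prime ∧
        ((f : Polynomial ℚ) = C (q : ℚ) ∨ (f : Polynomial ℚ) = -C (q : ℚ))) := by
  refine ⟨tauSel, ?_, ?_, ?_⟩
  · intro p hp
    exact ⟨zsel p, rfl⟩
  · intro f hf
    exact infinite_prime_divisors f hf
  · intro f
    constructor
    · exact prime_Rtau_char f
    · rintro ⟨q, hq, hcase⟩
      haveI : Fact q.Prime := ⟨hq⟩
      rcases hcase with h | h
      · have hfq : f = ((q : ℕ) : Rtau tauSel) := Subtype.ext (by rw [h, coe_natCast_Rtau])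
        rw [hfq]
        exact prime_natCast_Rtau
      · have hfq : f = -((q : ℕ) : Rtau tauSel) := Subtype.ext (by
          rw [h]
          push_cast
          rw [C_eq_natCast])
        rw [hfq]
        exact prime_natCast_Rtau.neg
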